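/- Consider f(x) = (x₂, 0), G(x) = (0, 1) on ℝ², h(x) = 1 − x₁² − x₂², α(r) = r. Then the min-norm controller magnitude |u₁*(x)| = (2x₁x₂ − h(x))/(2|x₂|) on D₋ = {x in the unit disk | −2x₁x₂ + h(x) < 0} is bounded on the closed unit disk: there exists M > 0 with |u₁*(x)| ≤ M for all x ∈ D₋. -/
import Mathlib


theorem stmt_15 :
    ∃ M : ℝ, 0 < M ∧ ∀ x : ℝ × ℝ,
      x.1 ^ 2 + x.2 ^ 2 ≤ 1 →
      -2 * x.1 * x.2 + (1 - x.1 ^ 2 - x.2 ^ 2) < 0 →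
      (2 * x.1 * x.2 - (1 - x.1 ^ 2 - x.2 ^ 2)) / (2 * |x.2|) ≤ M := by
  refine ⟨1, one_pos, fun x hdisk hneg => ?_⟩
  rcases eq_or_ne x.2 0 with h2 | h2
  · simp [h2]
  · have hpos : 0 < 2 * |x.2| := by positivity
    rw [div_le_one hpos]
    have h1 : x.1 ^ 2 ≤ 1 := by nlinarith [sq_nonneg x.2]
    have ha : |x.1| ≤ 1 := abs_le.mpr ⟨by nlinarith [sq_nonneg (x.1+1)], by nlinarith [sq_nonneg (x.1-1)]⟩
    nlinarith [abs_nonneg x.2, sq_abs x.1, sq_abs x.2, abs_mul_abs_self x.2,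
      mul_le_mul_of_nonneg_right ha (abs_nonneg x.2), abs_mul x.1 x.2,
      le_abs_self (x.1 * x.2)]
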